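/- arXiv:1609.05649 — 3 statements merged into one kernel-verified Lean document; each statement's English description precedes it below -/
import Mathlib

section
/- Let q be a prime power and n a positive integer. Let C and C' be linear codes (subspaces) of F_q^n, let a = (a_1,...,a_n) be a vector with every a_i a nonzero element of F_q, and let e = (a_1^2,...,a_n^2). If C^⊥ = e·C' and C ∩ C' = {0}, then a·C is a linear complementary dual (LCD) code, i.e., (a·C) ∩ (a·C)^⊥ = {0}. -/
open scoped BigOperators

/-- The Euclidean dual of a linear code `C ⊆ F^n`. -/
def dualCode {F : Type*} [Field F] {n : ℕ} (C : Submodule F (Fin n → F)) :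
    Submodule F (Fin n → F) where
  carrier := {v | ∀ c ∈ C, ∑ i, v i * c i = 0}
  add_mem' := by
    intro u v hu hv c hc
    simp only [Pi.add_apply, add_mul, Finset.sum_add_distrib, hu c hc, hv c hc, add_zero]
  zero_mem' := by intro c hc; simp
  smul_mem' := by
    intro t v hv c hc
    simp only [Pi.smul_apply, smul_eq_mul, mul_assoc, ← Finset.mul_sum, hv c hc, mul_zero]

/-- Coordinatewise multiplication by the vector `a`, as a linear map. -/
def mulVec {F : Type*} [Field F] {n : ℕ} (a : Fin n → F) :
    (Fin n → F) →ₗ[F] (Fin n → F) where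
  toFun v := fun i => a i * v i
  map_add' := by intro u v; funext i; simp [mul_add]
  map_smul' := by intro t v; funext i; simp [smul_eq_mul]; ring
/-- if `C^⊥ = e·C'` with `e = (a_1^2, …, a_n^2)` and `C ∩ C' = {0}`,
then `a·C` is a linear complementary dual (LCD) code. -/
theorem stmt1 {F : Type*} [Field F] [Fintype F] {n : ℕ} (hn : 0 < n)
    (C C' : Submodule F (Fin n → F)) (a : Fin n → F) (ha : ∀ i, a i ≠ 0)
    (h : dualCode C = C'.map (mulVec (fun i => (a i) ^ 2)))
    (h' : C ⊓ C' = ⊥) :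
    (C.map (mulVec a)) ⊓ dualCode (C.map (mulVec a)) = ⊥ := by
  rw [eq_bot_iff]
  rintro x ⟨hx1, hx2⟩
  obtain ⟨c, hc, rfl⟩ := hx1
  have key : (fun i => (a i) ^ 2 * c i) ∈ dualCode C := by
    intro d hd
    have := hx2 (mulVec a d) ⟨d, hd, rfl⟩
    simp only [mulVec, LinearMap.coe_mk, AddHom.coe_mk] at this ⊢
    calc ∑ i, (a i) ^ 2 * c i * d i = ∑ i, a i * c i * (a i * d i) := by
          apply Finset.sum_congr rfl; intro i _; ring
      _ = 0 := this
  rw [h] at key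
  obtain ⟨c', hc', heq⟩ := key
  have hcc : c = c' := by
    funext i
    have h2 := congrFun heq i
    simp only [mulVec, LinearMap.coe_mk, AddHom.coe_mk] at h2
    exact (mul_left_cancel₀ (pow_ne_zero 2 (ha i)) h2.symm)
  have hmem : c ∈ C ⊓ C' := ⟨hc, hcc ▸ hc'⟩
  rw [h'] at hmem
  have : c = 0 := hmem
  subst this
  simp
end

section
/- Let q be a prime power, ρ a generator of the cyclic group F_q^×, and r an integer with 0 < r and 2r ≤ q - 2. For each integer i, let v_i ∈ F_q^{q-1} be the vector whose j-th coordinate is ρ^{i·j} for j = 0, 1, ..., q-2. Then the Euclidean dual of the code C = span{v_i : -r ≤ i ≤ r} is C^⊥ = span{v_i : r+1 ≤ i ≤ q-2-r}. -/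
open scoped BigOperators

/-- The vector `v_i ∈ F^{q-1}` whose `j`-th coordinate is `ρ^{i·j}`, `j = 0, …, q-2`. -/
def expVec {F : Type*} [Field F] [Fintype F] (ρ : Fˣ) (i : ℤ) :
    Fin (Fintype.card F - 1) → F :=
  fun j => ((ρ ^ (i * ((j : ℕ) : ℤ)) : Fˣ) : F)

section aux
variable {F : Type*} [Field F] [Fintype F] (ρ : Fˣ)
  (hρ : ∀ x : Fˣ, x ∈ Subgroup.zpowers ρ)
include hρ
attribute [local instance] Fintype.ofFinite
set_option linter.unusedSectionVars false

lemma orderOf_rho : orderOf ρ = Fintype.card F - 1 := by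
  classical
  rw [orderOf_eq_card_of_forall_mem_zpowers hρ, Nat.card_eq_fintype_card, Fintype.card_units]

lemma rho_zpow_eq_one_iff (m : ℤ) :
    ρ ^ m = 1 ↔ ((Fintype.card F - 1 : ℕ) : ℤ) ∣ m := by
  rw [← orderOf_rho ρ hρ, orderOf_dvd_iff_zpow_eq_one]

lemma card_sub_one_ne_zero : ((Fintype.card F - 1 : ℕ) : F) ≠ 0 := by
  have h1 : (1:ℕ) ≤ Fintype.card F := Fintype.card_pos
  rw [Nat.cast_sub h1, FiniteField.cast_card_eq_zero, Nat.cast_one, zero_sub]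
  simp

lemma sum_expVec (m : ℤ) :
    ∑ j : Fin (Fintype.card F - 1), ((ρ ^ (m * ((j:ℕ):ℤ)) : Fˣ) : F) =
      if ((Fintype.card F - 1 : ℕ):ℤ) ∣ m then ((Fintype.card F - 1 : ℕ) : F) else 0 := by
  classical
  have h1 : ∀ j : Fin (Fintype.card F - 1),
      ((ρ ^ (m * ((j:ℕ):ℤ)) : Fˣ) : F) = (((ρ ^ m : Fˣ) : F)) ^ (j:ℕ) := by
    intro j
    rw [zpow_mul, zpow_natCast, Units.val_pow_eq_pow_val]
  simp_rw [h1]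
  rw [Fin.sum_univ_eq_sum_range (fun j => ((ρ^m : Fˣ):F)^j)]
  by_cases h : ((Fintype.card F - 1 : ℕ):ℤ) ∣ m
  · rw [if_pos h]
    have : ρ ^ m = 1 := (rho_zpow_eq_one_iff ρ hρ m).2 h
    simp [this]
  · rw [if_neg h]
    have hx1 : ((ρ^m : Fˣ):F) ≠ 1 := by
      intro hc
      exact h ((rho_zpow_eq_one_iff ρ hρ m).1 (Units.ext hc))
    rw [geom_sum_eq hx1]
    have hxn : ((ρ^m:Fˣ):F) ^ (Fintype.card F - 1) = 1 := by
      have h2 : (ρ^m) ^ (Fintype.card F - 1) = 1 := by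
        rw [← zpow_natCast, ← zpow_mul, mul_comm, zpow_mul,
          (rho_zpow_eq_one_iff ρ hρ _).2 dvd_rfl, one_zpow]
      rw [← Units.val_pow_eq_pow_val, h2, Units.val_one]
    rw [hxn, sub_self, zero_div]

lemma inner_expVec (i k : ℤ) :
    ∑ j, expVec ρ i j * expVec ρ k j =
      if ((Fintype.card F - 1:ℕ):ℤ) ∣ (i+k) then ((Fintype.card F - 1:ℕ):F) else 0 := by
  have h1 : ∀ j : Fin (Fintype.card F - 1),
      expVec ρ i j * expVec ρ k j = ((ρ ^ ((i+k) * ((j:ℕ):ℤ)) : Fˣ):F) := by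
    intro j
    unfold expVec
    rw [← Units.val_mul, ← zpow_add, add_mul]
  simp_rw [h1]
  exact sum_expVec ρ hρ (i+k)

lemma expVec_congr {i i' : ℤ} (h : ((Fintype.card F - 1:ℕ):ℤ) ∣ (i - i')) :
    expVec ρ i = expVec ρ i' := by
  funext j
  unfold expVec
  congr 1
  have h2 : ρ ^ ((i - i') * ((j:ℕ):ℤ)) = 1 :=
    (rho_zpow_eq_one_iff ρ hρ _).2 (h.mul_right _)
  calc ρ ^ (i * ((j:ℕ):ℤ)) = ρ ^ (i' * ((j:ℕ):ℤ) + (i - i') * ((j:ℕ):ℤ)) := by ring_nf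
    _ = ρ ^ (i' * ((j:ℕ):ℤ)) * ρ ^ ((i - i') * ((j:ℕ):ℤ)) := zpow_add ρ _ _
    _ = ρ ^ (i' * ((j:ℕ):ℤ)) := by rw [h2, mul_one]


omit hρ in
lemma fin_dvd_iff {n : ℕ} (i k : Fin n) :
    ((n:ℕ):ℤ) ∣ ((i:ℕ):ℤ) - ((k:ℕ):ℤ) ↔ i = k := by
  constructor
  · intro h
    have h0 : ((i:ℕ):ℤ) - ((k:ℕ):ℤ) = 0 := by
      refine Int.eq_zero_of_dvd_of_natAbs_lt_natAbs h ?_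
      have hi := i.isLt
      have hk := k.isLt
      omega
    have : (i:ℕ) = (k:ℕ) := by omega
    exact Fin.ext this
  · rintro rfl; simp

lemma li_expVec :
    LinearIndependent F (fun k : Fin (Fintype.card F - 1) => expVec ρ ((k:ℕ):ℤ)) := by
  classical
  rw [Fintype.linearIndependent_iff]
  intro g hg k
  have hsum : ∑ j, (∑ i : Fin (Fintype.card F - 1), g i • expVec ρ ((i:ℕ):ℤ)) j
      * expVec ρ (-((k:ℕ):ℤ)) j = 0 := by
    rw [hg]; simp
  have hswap : ∑ j, (∑ i : Fin (Fintype.card F - 1), g i • expVec ρ ((i:ℕ):ℤ)) j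
      * expVec ρ (-((k:ℕ):ℤ)) j
      = ∑ i : Fin (Fintype.card F - 1), g i *
        (∑ j, expVec ρ ((i:ℕ):ℤ) j * expVec ρ (-((k:ℕ):ℤ)) j) := by
    simp_rw [Finset.sum_apply, Finset.sum_mul, Finset.mul_sum, Pi.smul_apply,
      smul_eq_mul, mul_assoc]
    rw [Finset.sum_comm]
  rw [hswap] at hsum
  have hiv : ∀ i : Fin (Fintype.card F - 1),
      (∑ j, expVec ρ ((i:ℕ):ℤ) j * expVec ρ (-((k:ℕ):ℤ)) j)
        = if i = k then ((Fintype.card F - 1 : ℕ):F) else 0 := by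
    intro i
    rw [inner_expVec ρ hρ]
    congr 1
    rw [← sub_eq_add_neg]
    exact propext (fin_dvd_iff i k)
  simp_rw [hiv, mul_ite, mul_zero, Finset.sum_ite_eq', Finset.mem_univ,
    if_true] at hsum
  rcases mul_eq_zero.1 hsum with h | h
  · exact h
  · exact absurd h (card_sub_one_ne_zero ρ hρ)



lemma pair_sum (c : Fin (Fintype.card F - 1) → F) (m : ℤ) :
    ∑ j, (∑ i : Fin (Fintype.card F - 1), c i • expVec ρ ((i:ℕ):ℤ)) j * expVec ρ m j
      = ∑ i : Fin (Fintype.card F - 1), c i *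
        (if ((Fintype.card F - 1:ℕ):ℤ) ∣ ((i:ℕ):ℤ) + m
          then ((Fintype.card F - 1:ℕ):F) else 0) := by
  simp_rw [Finset.sum_apply, Finset.sum_mul, Pi.smul_apply, smul_eq_mul, mul_assoc]
  rw [Finset.sum_comm]
  simp_rw [← Finset.mul_sum, inner_expVec ρ hρ]


end aux

/-- the Euclidean dual of `C = span{v_i : -r ≤ i ≤ r}` is
`span{v_i : r+1 ≤ i ≤ q-2-r}`. -/
theorem stmt10 {F : Type*} [Field F] [Fintype F] (ρ : Fˣ)
    (hρ : ∀ x : Fˣ, x ∈ Subgroup.zpowers ρ)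
    (r : ℤ) (hr : 0 < r) (hr2 : 2 * r ≤ (Fintype.card F : ℤ) - 2) :
    dualCode (Submodule.span F (expVec ρ '' Set.Icc (-r) r)) =
      Submodule.span F (expVec ρ '' Set.Icc (r + 1) ((Fintype.card F : ℤ) - 2 - r)) := by

  classical
  have h1q : (1:ℕ) ≤ Fintype.card F := Fintype.card_pos
  have hNZ : ((Fintype.card F - 1 : ℕ):ℤ) = (Fintype.card F :ℤ) - 1 := by
    rw [Nat.cast_sub h1q, Nat.cast_one]
  have hNF := card_sub_one_ne_zero ρ hρ
  apply le_antisymm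
  · -- dual C ≤ span D
    intro w hw
    have hw' : ∀ c ∈ Submodule.span F (expVec ρ '' Set.Icc (-r) r),
        ∑ j, w j * c j = 0 := hw
    have hli := li_expVec ρ hρ
    have htop : Submodule.span F
        (Set.range (fun k : Fin (Fintype.card F - 1) => expVec ρ ((k:ℕ):ℤ))) = ⊤ := by
      apply hli.span_eq_top_of_card_eq_finrank'
      simp [Module.finrank_pi]
    obtain ⟨c, hc⟩ := (Submodule.mem_span_range_iff_exists_fun F).1
      (htop ▸ Submodule.mem_top :
        w ∈ Submodule.span F (Set.range (fun k : Fin (Fintype.card F - 1) =>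
          expVec ρ ((k:ℕ):ℤ))))
    have hkey : ∀ k : Fin (Fintype.card F - 1),
        (((k:ℕ):ℤ) ≤ r ∨ ((Fintype.card F:ℤ) - 1) - r ≤ ((k:ℕ):ℤ)) → c k = 0 := by
      intro k hk
      have hkub : ((k:ℕ):ℤ) < (Fintype.card F:ℤ) - 1 := by
        have := k.isLt
        omega
      have hklb : (0:ℤ) ≤ ((k:ℕ):ℤ) := Int.natCast_nonneg _
      obtain ⟨m, hm, hdvd⟩ : ∃ m : ℤ, m ∈ Set.Icc (-r) r ∧
          ((Fintype.card F - 1:ℕ):ℤ) ∣ m + ((k:ℕ):ℤ) := by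
        rcases hk with hk | hk
        · exact ⟨-((k:ℕ):ℤ), ⟨by omega, by omega⟩, by simp⟩
        · refine ⟨(Fintype.card F:ℤ) - 1 - ((k:ℕ):ℤ), ⟨by omega, by omega⟩, ?_⟩
          rw [hNZ]
          exact ⟨1, by ring⟩
      have hvC : expVec ρ m ∈ Submodule.span F (expVec ρ '' Set.Icc (-r) r) :=
        Submodule.subset_span ⟨m, hm, rfl⟩
      have h0 := hw' _ hvC
      rw [← hc, pair_sum ρ hρ] at h0
      have hiff : ∀ i : Fin (Fintype.card F - 1),
          (((Fintype.card F - 1:ℕ):ℤ) ∣ ((i:ℕ):ℤ) + m) ↔ i = k := by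
        intro i
        rw [← fin_dvd_iff i k]
        constructor
        · intro h
          have h2 := dvd_sub h hdvd
          have h3 : ((i:ℕ):ℤ) + m - (m + ((k:ℕ):ℤ)) = ((i:ℕ):ℤ) - ((k:ℕ):ℤ) := by ring
          rwa [h3] at h2
        · intro h
          have h3 : ((i:ℕ):ℤ) + m = (((i:ℕ):ℤ) - ((k:ℕ):ℤ)) + (m + ((k:ℕ):ℤ)) := by ring
          rw [h3]
          exact dvd_add h hdvd
      simp_rw [hiff] at h0
      simp_rw [mul_ite, mul_zero, Finset.sum_ite_eq', Finset.mem_univ, if_true] at h0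
      rcases mul_eq_zero.1 h0 with h | h
      · exact h
      · exact absurd h hNF
    rw [← hc]
    apply Submodule.sum_mem
    intro k _
    by_cases hk : (((k:ℕ):ℤ) ≤ r ∨ ((Fintype.card F:ℤ) - 1) - r ≤ ((k:ℕ):ℤ))
    · rw [hkey k hk, zero_smul]
      exact Submodule.zero_mem _
    · push_neg at hk
      apply Submodule.smul_mem
      apply Submodule.subset_span
      exact ⟨((k:ℕ):ℤ), ⟨by omega, by omega⟩, rfl⟩
  · -- span D ≤ dual C
    rw [Submodule.span_le]
    rintro x ⟨i, hi, rfl⟩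
    show ∀ c ∈ Submodule.span F (expVec ρ '' Set.Icc (-r) r),
      ∑ j, expVec ρ i j * c j = 0
    intro cv hcv
    induction hcv using Submodule.span_induction with
    | mem c hcs =>
      obtain ⟨m, hm, rfl⟩ := hcs
      rw [inner_expVec ρ hρ, if_neg]
      intro hdvd
      obtain ⟨hi1, hi2⟩ := hi
      obtain ⟨hm1, hm2⟩ := hm
      have hpos : 0 < i + m := by omega
      have hle := Int.le_of_dvd hpos hdvd
      rw [hNZ] at hle
      omega
    | zero => simp
    | add c d _ _ hcp hdp =>
      simp only [Pi.add_apply, mul_add, Finset.sum_add_distrib, hcp, hdp, add_zero]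
    | smul a c _ hcp =>
      simp only [Pi.smul_apply, smul_eq_mul, mul_left_comm, ← Finset.mul_sum, hcp, mul_zero]
end

section
/- Let F_4 = F_2[ρ] be the field with four elements, where ρ satisfies ρ^2 + ρ + 1 = 0. Let C ⊆ F_4^7 be the linear code spanned by the three rows g_1 = (1,1,1,1,1,1,1), g_2 = (0,ρ,ρ,ρ^2,ρ^2,1,1), g_3 = (0,ρ,1,1,ρ^2,ρ^2,ρ). Then C is a linear complementary dual (LCD) code of length 7, dimension 3, and minimum Hamming distance 4. -/
open scoped BigOperators

/- ### Auxiliary model of `F₄` as `ZMod 2 × ZMod 2` -/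

abbrev MM : Type := ZMod 2 × ZMod 2

def mmul (x y : MM) : MM := (x.1*y.1 + x.2*y.2, x.1*y.2 + x.2*y.1 + x.2*y.2)

def MG1 : Fin 7 → MM := fun _ => (1,0)
def MG2 : Fin 7 → MM := ![(0,0),(0,1),(0,1),(1,1),(1,1),(1,0),(1,0)]
def MG3 : Fin 7 → MM := ![(0,0),(0,1),(1,0),(1,0),(1,1),(1,1),(0,1)]

def mcombo (a b c : MM) : Fin 7 → MM :=
  fun i => mmul a (MG1 i) + mmul b (MG2 i) + mmul c (MG3 i)

lemma mdecA : ∀ a b c : MM, (∑ i, mmul (mcombo a b c i) (MG1 i)) = 0 →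
    (∑ i, mmul (mcombo a b c i) (MG2 i)) = 0 →
    (∑ i, mmul (mcombo a b c i) (MG3 i)) = 0 → mcombo a b c = 0 := by decide

lemma mdecB : ∀ a b c : MM, mcombo a b c = 0 → a = 0 ∧ b = 0 ∧ c = 0 := by decide

lemma mdecC : ∀ a b c : MM, mcombo a b c ≠ 0 → 4 ≤ hammingNorm (mcombo a b c) := by decide

lemma mdecD : hammingNorm (mcombo 0 (0,1) (1,0)) = 4 := by decide

lemma mdecE : mcombo 0 (0,1) (1,0) ≠ 0 := by decide

section EE
variable {F : Type*} [Field F] [CharP F 2] (ρ : F)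

/-- The embedding of the model into `F`. -/
def ee (x : MM) : F :=
  (ZMod.castHom (dvd_refl 2) F) x.1 + (ZMod.castHom (dvd_refl 2) F) x.2 * ρ

lemma ee_zero : ee ρ (0 : MM) = 0 := by simp [ee]

lemma ee_add (x y : MM) : ee ρ (x + y) = ee ρ x + ee ρ y := by
  simp [ee, Prod.fst_add, Prod.snd_add, map_add]; ring

lemma ee_mul (hρ : ρ^2 + ρ + 1 = 0) (x y : MM) :
    ee ρ (mmul x y) = ee ρ x * ee ρ y := by
  have h2 : (2:F) = 0 := by exact_mod_cast CharP.cast_eq_zero F 2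
  simp only [ee, mmul, map_add, map_mul]
  linear_combination ((ZMod.castHom (dvd_refl 2) F) x.2 * (ZMod.castHom (dvd_refl 2) F) y.2) * hρ -
    ((ZMod.castHom (dvd_refl 2) F) x.2 * (ZMod.castHom (dvd_refl 2) F) y.2 * ρ ^ 2) * h2

lemma ee_eq_zero (hρ0 : ρ ≠ 0) (h1ρ : 1 + ρ ≠ 0) {x : MM} (h : ee ρ x = 0) : x = 0 := by
  have hu : ∀ u : ZMod 2, u = 0 ∨ u = 1 := by decide
  obtain ⟨x1, x2⟩ := x
  rcases hu x1 with rfl|rfl <;> rcases hu x2 with rfl|rfl <;> simp_all [ee]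

/-- `ee` as an additive monoid hom. -/
def eeHom : MM →+ F := AddMonoidHom.mk' (ee ρ) (ee_add ρ)

end EE

/-- over `F_4 = F_2[ρ]` with `ρ^2 + ρ + 1 = 0`, the code spanned by
`(1,1,1,1,1,1,1)`, `(0,ρ,ρ,ρ²,ρ²,1,1)` and `(0,ρ,1,1,ρ²,ρ²,ρ)` is an LCD code of
length 7, dimension 3 and minimum Hamming distance 4. -/
theorem stmt11 {F : Type*} [Field F] [Fintype F] [DecidableEq F]
    (hF : Fintype.card F = 4) (ρ : F) (hρ : ρ ^ 2 + ρ + 1 = 0)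
    (C : Submodule F (Fin 7 → F))
    (hC : C = Submodule.span F
      {![1, 1, 1, 1, 1, 1, 1],
       ![0, ρ, ρ, ρ ^ 2, ρ ^ 2, 1, 1],
       ![0, ρ, 1, 1, ρ ^ 2, ρ ^ 2, ρ]}) :
    C ⊓ dualCode C = ⊥ ∧
    Module.finrank F C = 3 ∧
    sInf {w : ℕ | ∃ c ∈ C, c ≠ 0 ∧ hammingNorm c = w} = 4 := by
  -- basic field facts
  have h4 : (4 : F) = 0 := by
    have := FiniteField.cast_card_eq_zero F
    rw [hF] at this; exact_mod_cast this
  have h2 : (2 : F) = 0 := by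
    have h : (2 : F) * 2 = 0 := by rw [show (2:F)*2 = 4 by norm_num, h4]
    exact mul_self_eq_zero.mp h
  have hchar : CharP F 2 := by
    have hch := ringChar.charP F
    have hd : ringChar F ∣ 2 := ringChar.dvd (by exact_mod_cast h2)
    rcases CharP.char_is_prime_or_zero F (ringChar F) with hp | hp
    · have : ringChar F = 2 := (Nat.prime_dvd_prime_iff_eq hp Nat.prime_two).mp hd
      rwa [this] at hch
    · rw [hp] at hd; exact absurd (Nat.eq_zero_of_zero_dvd hd) (by norm_num)
  haveI := hchar
  have hρ0 : ρ ≠ 0 := by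
    intro h; rw [h] at hρ; simp at hρ
  have hρ1 : ρ ≠ 1 := by
    intro h
    apply one_ne_zero (α := F)
    rw [h] at hρ
    linear_combination hρ - h2
  have h1ρ : (1 : F) + ρ ≠ 0 := by
    intro h
    apply one_ne_zero (α := F)
    linear_combination hρ - ρ * h
  -- every element of F is 0, 1, ρ or 1+ρ
  have hall : ∀ x : F, x = 0 ∨ x = 1 ∨ x = ρ ∨ x = 1 + ρ := by
    have h01 : (0:F) ∉ ({1, ρ, 1+ρ} : Finset F) := by
      simp only [Finset.mem_insert, Finset.mem_singleton]
      push_neg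
      exact ⟨fun h => one_ne_zero h.symm, fun h => hρ0 h.symm, fun h => h1ρ h.symm⟩
    have h12 : (1:F) ∉ ({ρ, 1+ρ} : Finset F) := by
      simp only [Finset.mem_insert, Finset.mem_singleton]
      push_neg
      refine ⟨fun h => hρ1 h.symm, fun h => hρ0 ?_⟩
      linear_combination -h
    have h23 : ρ ∉ ({1+ρ} : Finset F) := by
      simp only [Finset.mem_singleton]
      intro h
      exact one_ne_zero (α := F) (by linear_combination -h)
    have hcard : ({0, 1, ρ, 1+ρ} : Finset F).card = 4 := by
      rw [Finset.card_insert_of_notMem h01, Finset.card_insert_of_notMem h12,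
        Finset.card_insert_of_notMem h23, Finset.card_singleton]
    have huniv : ({0, 1, ρ, 1+ρ} : Finset F) = Finset.univ :=
      Finset.eq_univ_of_card _ (by rw [hcard, hF])
    intro x
    have hx : x ∈ ({0, 1, ρ, 1+ρ} : Finset F) := huniv ▸ Finset.mem_univ x
    simpa [Finset.mem_insert, Finset.mem_singleton] using hx
  have esurj : ∀ x : F, ∃ m : MM, x = ee ρ m := by
    intro x
    rcases hall x with rfl | rfl | rfl | rfl
    · exact ⟨0, (ee_zero ρ).symm⟩
    · exact ⟨(1,0), by simp [ee]⟩
    · exact ⟨(0,1), by simp [ee]⟩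
    · exact ⟨(1,1), by simp [ee]⟩
  set g1 : Fin 7 → F := ![1, 1, 1, 1, 1, 1, 1] with hg1
  set g2 : Fin 7 → F := ![0, ρ, ρ, ρ ^ 2, ρ ^ 2, 1, 1] with hg2
  set g3 : Fin 7 → F := ![0, ρ, 1, 1, ρ ^ 2, ρ ^ 2, ρ] with hg3
  have hsq : (1 : F) + ρ = ρ ^ 2 := by linear_combination hρ - ρ^2 * h2
  have e00 : ee ρ ((0,0) : MM) = 0 := by simp [ee]
  have e10 : ee ρ ((1,0) : MM) = 1 := by simp [ee]
  have e01 : ee ρ ((0,1) : MM) = ρ := by simp [ee]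
  have e11 : ee ρ ((1,1) : MM) = ρ ^ 2 := by simpa [ee] using hsq
  have heg1 : ∀ i, ee ρ (MG1 i) = g1 i := by
    intro i
    fin_cases i <;> exact e10
  have heg2 : ∀ i, ee ρ (MG2 i) = g2 i := by
    intro i
    fin_cases i
    exacts [e00, e01, e01, e11, e11, e10, e10]
  have heg3 : ∀ i, ee ρ (MG3 i) = g3 i := by
    intro i
    fin_cases i
    exacts [e00, e01, e10, e10, e11, e11, e01]
  have hkey : ∀ a b c : MM,
      (ee ρ a) • g1 + (ee ρ b) • g2 + (ee ρ c) • g3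
        = fun i => ee ρ (mcombo a b c i) := by
    intro a b c
    funext i
    simp only [Pi.add_apply, Pi.smul_apply, smul_eq_mul, mcombo,
      ee_add ρ, ee_mul ρ hρ, heg1 i, heg2 i, heg3 i]
  have hmem : ∀ v, v ∈ C ↔ ∃ a b c : F, v = a • g1 + b • g2 + c • g3 := by
    intro v
    rw [hC]
    constructor
    · intro h
      rcases Submodule.mem_span_insert.mp h with ⟨a, z, hz, rfl⟩
      rcases Submodule.mem_span_insert.mp hz with ⟨b, w, hw, rfl⟩
      rcases Submodule.mem_span_singleton.mp hw with ⟨c, rfl⟩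
      exact ⟨a, b, c, (add_assoc _ _ _).symm⟩
    · rintro ⟨a, b, c, rfl⟩
      refine Submodule.add_mem _ (Submodule.add_mem _ ?_ ?_) ?_ <;>
        exact Submodule.smul_mem _ _ (Submodule.subset_span (by simp))
  have hrep : ∀ v ∈ C, ∃ a b c : MM, v = fun i => ee ρ (mcombo a b c i) := by
    intro v hv
    obtain ⟨a, b, c, rfl⟩ := (hmem v).mp hv
    obtain ⟨a', rfl⟩ := esurj a
    obtain ⟨b', rfl⟩ := esurj b
    obtain ⟨c', rfl⟩ := esurj c
    exact ⟨a', b', c', hkey a' b' c'⟩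
  have hEzero : ∀ w : Fin 7 → MM, (fun i => ee ρ (w i)) = (0 : Fin 7 → F) → w = 0 := by
    intro w h
    funext i
    exact ee_eq_zero ρ hρ0 h1ρ (congrFun h i)
  have hnorm : ∀ w : Fin 7 → MM,
      hammingNorm (fun i => ee ρ (w i)) = hammingNorm w := by
    intro w
    unfold hammingNorm
    congr 1
    apply Finset.filter_congr
    intro i _
    constructor
    · intro h h0
      refine h ?_
      show ee ρ (w i) = 0
      rw [h0]; exact ee_zero ρ
    · intro h h0
      exact h (ee_eq_zero ρ hρ0 h1ρ h0)
  have hg1C : g1 ∈ C := (hmem g1).mpr ⟨1, 0, 0, by simp⟩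
  have hg2C : g2 ∈ C := (hmem g2).mpr ⟨0, 1, 0, by simp⟩
  have hg3C : g3 ∈ C := (hmem g3).mpr ⟨0, 0, 1, by simp⟩
  refine ⟨?_, ?_, ?_⟩
  · -- LCD
    rw [eq_bot_iff]
    intro v hv
    obtain ⟨hvC, hvD⟩ := Submodule.mem_inf.mp hv
    have hvD' : ∀ c ∈ C, ∑ i, v i * c i = 0 := hvD
    obtain ⟨a, b, c, rfl⟩ := hrep v hvC
    set w : Fin 7 → MM := mcombo a b c with hw
    have key : ∀ (Gk : Fin 7 → MM) (gk : Fin 7 → F), (∀ i, ee ρ (Gk i) = gk i) →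
        (∑ i, ee ρ (w i) * gk i = 0) → (∑ i, mmul (w i) (Gk i)) = 0 := by
      intro Gk gk hg hsum
      apply ee_eq_zero ρ hρ0 h1ρ
      rw [show ee ρ (∑ i, mmul (w i) (Gk i)) = ∑ i, ee ρ (mmul (w i) (Gk i)) from
        map_sum (eeHom ρ) _ _]
      simpa [ee_mul ρ hρ, hg] using hsum
    have hw0 : w = 0 :=
      mdecA a b c
        (key MG1 g1 heg1 (by simpa using hvD' g1 hg1C))
        (key MG2 g2 heg2 (by simpa using hvD' g2 hg2C))
        (key MG3 g3 heg3 (by simpa using hvD' g3 hg3C))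
    have : (fun i => ee ρ (w i)) = (0 : Fin 7 → F) := by
      funext i; rw [hw0]; exact ee_zero ρ
    simpa [Submodule.mem_bot] using this
  · -- dimension
    have hli : LinearIndependent F ![g1, g2, g3] := by
      rw [Fintype.linearIndependent_iff]
      intro t ht
      rw [Fin.sum_univ_three] at ht
      simp only [Matrix.cons_val_zero, Matrix.cons_val_one, Matrix.head_cons,
        Matrix.cons_val_two, Matrix.tail_cons] at ht
      obtain ⟨a', ha⟩ := esurj (t 0)
      obtain ⟨b', hb⟩ := esurj (t 1)
      obtain ⟨c', hc⟩ := esurj (t 2)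
      rw [ha, hb, hc, hkey a' b' c'] at ht
      obtain ⟨ha0, hb0, hc0⟩ := mdecB a' b' c' (hEzero _ ht)
      have H0 : t 0 = 0 := by rw [ha, ha0]; exact ee_zero ρ
      have H1 : t 1 = 0 := by rw [hb, hb0]; exact ee_zero ρ
      have H2 : t 2 = 0 := by rw [hc, hc0]; exact ee_zero ρ
      intro i
      fin_cases i <;> assumption
    have hrange : ({g1, g2, g3} : Set (Fin 7 → F)) = Set.range ![g1, g2, g3] := by
      ext x
      constructor
      · rintro (rfl | rfl | rfl)
        exacts [⟨0, rfl⟩, ⟨1, rfl⟩, ⟨2, rfl⟩]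
      · rintro ⟨i, rfl⟩
        fin_cases i
        · exact Or.inl rfl
        · exact Or.inr (Or.inl rfl)
        · exact Or.inr (Or.inr rfl)
    rw [hC, hrange, finrank_span_eq_card hli]
    simp
  · -- minimum distance
    set v4 : Fin 7 → F := fun i => ee ρ (mcombo 0 (0,1) (1,0) i) with hv4
    have h4mem : 4 ∈ {w : ℕ | ∃ c ∈ C, c ≠ 0 ∧ hammingNorm c = w} := by
      refine ⟨v4, ?_, ?_, ?_⟩
      · exact (hmem v4).mpr ⟨ee ρ 0, ee ρ (0,1), ee ρ (1,0), (hkey 0 (0,1) (1,0)).symm⟩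
      · intro h0
        exact mdecE (hEzero _ (by rw [← hv4]; exact h0))
      · rw [hv4, hnorm, mdecD]
    apply le_antisymm
    · exact Nat.sInf_le h4mem
    · apply le_csInf ⟨4, h4mem⟩
      rintro n ⟨v, hvC, hv0, rfl⟩
      obtain ⟨a, b, c, rfl⟩ := hrep v hvC
      have hwne : mcombo a b c ≠ 0 := by
        intro hzz
        apply hv0
        funext i; rw [hzz]; exact ee_zero ρ
      rw [hnorm]
      exact mdecC a b c hwne
end
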